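/- Let β₀ = 319π²/1080. For every real x ≥ 1000, the quantity g(x) := (∑_{m ≤ x} σ(30m)/(30m)) − β₀·x satisfies −30·log(30x) − 30 < g(x) < 30·log(30x) + 32, where the sum runs over positive integers m ≤ x. -/

import Mathlib

open ArithmeticFunction Finset Real Filter Topology

private lemma hasSum_dvd_aux (e : ℕ) (he : 0 < e) :
    HasSum (fun n : ℕ => if e ∣ n then (1:ℝ)/(n:ℝ)^2 else 0) (π^2/6/(e:ℝ)^2) := by
  have hinj : Function.Injective (fun k : ℕ => e * k) := fun a b h => by
    exact Nat.eq_of_mul_eq_mul_left he h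
  have hrange : ∀ n ∉ Set.range (fun k : ℕ => e * k),
      (if e ∣ n then (1:ℝ)/(n:ℝ)^2 else 0) = 0 := by
    intro n hn
    rw [if_neg]
    rintro ⟨k, hk⟩
    exact hn ⟨k, hk.symm⟩
  rw [← Function.Injective.hasSum_iff hinj hrange]
  have heq : ((fun n : ℕ => if e ∣ n then (1:ℝ)/(n:ℝ)^2 else 0) ∘ (fun k => e * k))
      = fun k : ℕ => (1/(e:ℝ)^2) * (1/(k:ℝ)^2) := by
    funext k
    simp only [Function.comp_apply, if_pos (Dvd.intro k rfl)]
    push_cast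
    rw [mul_pow]
    rcases eq_or_ne (k:ℝ) 0 with h | h
    · simp [h]
    · have he0 : (e:ℝ) ≠ 0 := by positivity
      field_simp
  rw [heq]
  have h2 := hasSum_zeta_two.mul_left (1/(e:ℝ)^2)
  rw [show π^2/6/(e:ℝ)^2 = 1/(e:ℝ)^2 * (π^2/6) by ring]
  exact h2

private lemma gcd_eq_sum (n : ℕ) :
    ((Nat.gcd n 30 : ℕ) : ℝ) = ∑ e ∈ (30:ℕ).divisors, (if e ∣ n then (Nat.totient e : ℝ) else 0) := by
  have hg0 : Nat.gcd n 30 ≠ 0 := Nat.gcd_ne_zero_right (by norm_num)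
  have hdiv : (Nat.gcd n 30).divisors = (30:ℕ).divisors.filter (· ∣ n) := by
    ext e
    simp only [Nat.mem_divisors, Finset.mem_filter, Nat.dvd_gcd_iff]
    constructor
    · rintro ⟨⟨h1, h2⟩, _⟩; exact ⟨⟨h2, by norm_num⟩, h1⟩
    · rintro ⟨⟨h2, _⟩, h1⟩; exact ⟨⟨h1, h2⟩, hg0⟩
  rw [← Nat.sum_totient (Nat.gcd n 30), hdiv, Finset.sum_filter, Nat.cast_sum]
  apply Finset.sum_congr rfl
  intro e _
  split <;> simp

private lemma hasSum_gcd :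
    HasSum (fun d : ℕ => (Nat.gcd d 30 : ℝ) / (d:ℝ)^2) (319 * π^2 / 1080) := by
  have key : ∀ e ∈ (30:ℕ).divisors,
      HasSum (fun n : ℕ => if e ∣ n then (Nat.totient e : ℝ)/(n:ℝ)^2 else 0)
        ((Nat.totient e : ℝ) * (π^2/6/(e:ℝ)^2)) := by
    intro e he
    have he0 : 0 < e := Nat.pos_of_mem_divisors he
    have h := (hasSum_dvd_aux e he0).mul_left (Nat.totient e : ℝ)
    have heq2 : (fun n : ℕ => if e ∣ n then (Nat.totient e : ℝ)/(n:ℝ)^2 else 0)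
        = fun n : ℕ => (Nat.totient e : ℝ) * (if e ∣ n then (1:ℝ)/(n:ℝ)^2 else 0) := by
      funext n; rw [mul_ite, mul_zero, mul_one_div]
    rw [heq2]; exact h
  have h := hasSum_sum key
  have hfe : (fun n : ℕ => ∑ e ∈ (30:ℕ).divisors, if e ∣ n then (Nat.totient e : ℝ)/(n:ℝ)^2 else 0)
      = fun d : ℕ => (Nat.gcd d 30 : ℝ) / (d:ℝ)^2 := by
    funext n
    rw [gcd_eq_sum n, Finset.sum_div]
    apply Finset.sum_congr rfl
    intro e _
    split <;> simp
  have hval : ∑ e ∈ (30:ℕ).divisors, (Nat.totient e : ℝ) * (π^2/6/(e:ℝ)^2) = 319 * π^2/1080 := by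
    rw [show (30:ℕ).divisors = {1,2,3,5,6,10,15,30} from by decide]
    norm_num [Finset.sum_insert, Finset.mem_insert, Finset.mem_singleton,
      show Nat.totient 1 = 1 from by decide, show Nat.totient 2 = 1 from by decide,
      show Nat.totient 3 = 2 from by decide, show Nat.totient 5 = 4 from by decide,
      show Nat.totient 6 = 2 from by decide, show Nat.totient 10 = 4 from by decide,
      show Nat.totient 15 = 8 from by decide, show Nat.totient 30 = 8 from by decide]
    ring
  rw [hfe, hval] at h
  exact h

private lemma telescope (M : ℕ) (hM : 0 < M) :
    HasSum (fun i : ℕ => (1:ℝ)/(((i:ℝ)+M)*((i:ℝ)+M+1))) (1/(M:ℝ)) := by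
  have hMpos : (0:ℝ) < M := by exact_mod_cast hM
  have hterm : ∀ i : ℕ, (1:ℝ)/(((i:ℝ)+M)*((i:ℝ)+M+1))
      = (fun j : ℕ => 1/((j:ℝ)+M)) i - (fun j : ℕ => 1/((j:ℝ)+M)) (i+1) := by
    intro i
    have h1 : ((i:ℝ) + M) ≠ 0 := by positivity
    have h2 : ((i:ℝ) + 1 + M) ≠ 0 := by positivity
    simp only []
    push_cast
    rw [div_sub_div _ _ h1 h2, one_mul, mul_one]
    ring_nf
  rw [hasSum_iff_tendsto_nat_of_nonneg (fun i => by positivity)]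
  have hps : ∀ n : ℕ, ∑ i ∈ Finset.range n, (1:ℝ)/(((i:ℝ)+M)*((i:ℝ)+M+1))
      = 1/(M:ℝ) - 1/((n:ℝ)+M) := by
    intro n
    rw [Finset.sum_congr rfl (fun i _ => hterm i),
      Finset.sum_range_sub' (fun j : ℕ => 1/((j:ℝ)+M)) n]
    norm_num
  simp only [hps]
  have h1 : Tendsto (fun n : ℕ => ((n:ℝ)+M)) atTop atTop :=
    Filter.tendsto_atTop_add_const_right atTop (M:ℝ) tendsto_natCast_atTop_atTop
  have h2 : Tendsto (fun n : ℕ => 1/((n:ℝ)+M)) atTop (𝓝 0) := by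
    simpa [one_div, Function.comp_def] using tendsto_inv_atTop_zero.comp h1
  simpa using tendsto_const_nhds.sub h2

private lemma dvd_30mul (d m : ℕ) : d ∣ 30 * m ↔ d / Nat.gcd d 30 ∣ m := by
  have hg : 0 < Nat.gcd d 30 := Nat.gcd_pos_of_pos_right d (by norm_num)
  constructor
  · intro h
    have hcop := Nat.coprime_div_gcd_div_gcd (m := d) (n := 30) hg
    have h2 : Nat.gcd d 30 * (d / Nat.gcd d 30) ∣ Nat.gcd d 30 * ((30 / Nat.gcd d 30) * m) := by
      rw [Nat.mul_div_cancel' (Nat.gcd_dvd_left d 30), ← mul_assoc,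
        Nat.mul_div_cancel' (Nat.gcd_dvd_right d 30)]
      exact h
    have h3 := (Nat.mul_dvd_mul_iff_left hg).mp h2
    exact Nat.Coprime.dvd_of_dvd_mul_left hcop h3
  · intro h
    have h2 : Nat.gcd d 30 * (d / Nat.gcd d 30) ∣ 30 * m :=
      mul_dvd_mul (Nat.gcd_dvd_right d 30) h
    rwa [Nat.mul_div_cancel' (Nat.gcd_dvd_left d 30)] at h2

private lemma sigma_div (n : ℕ) (hn : 0 < n) :
    (sigma 1 n : ℝ)/(n:ℝ) = ∑ d ∈ n.divisors, 1/(d:ℝ) := by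
  rw [← Nat.sum_div_divisors n (fun d => 1/(d:ℝ)), sigma_one_apply, Nat.cast_sum,
    Finset.sum_div]
  apply Finset.sum_congr rfl
  intro d hd
  rw [Nat.mem_divisors] at hd
  have hd0 : d ≠ 0 := by
    rintro rfl; exact hn.ne' (Nat.eq_zero_of_zero_dvd hd.1)
  rw [Nat.cast_div hd.1 (by exact_mod_cast hd0), one_div_div]

private lemma pi_sq_bound : 319 * π^2 / 1080 ≤ 5 := by
  nlinarith [Real.pi_le_four, Real.pi_pos]

set_option maxHeartbeats 1000000 in
theorem g_bounds (x : ℝ) (hx : x ≥ 1000) :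
    -30 * Real.log (30 * x) - 30 <
      (∑ m ∈ Finset.Icc 1 ⌊x⌋₊, (sigma 1 (30 * m) : ℝ) / (30 * m)) - (319 * π ^ 2 / 1080) * x ∧
    (∑ m ∈ Finset.Icc 1 ⌊x⌋₊, (sigma 1 (30 * m) : ℝ) / (30 * m)) - (319 * π ^ 2 / 1080) * x <
      30 * Real.log (30 * x) + 32 := by
  set N := ⌊x⌋₊ with hNdef
  have hx0 : (0:ℝ) < x := by linarith
  have hN1000 : 1000 ≤ N := Nat.le_floor (by exact_mod_cast hx)
  have hNle : (N:ℝ) ≤ x := Nat.floor_le hx0.le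
  have hNgt : x < N + 1 := Nat.lt_floor_add_one x
  have hNpos : 0 < N := by omega
  have hNR : (0:ℝ) < N := by exact_mod_cast hNpos
  set M := 30 * N with hMdef
  have hMpos : 0 < M := by omega
  set fd : ℕ → ℝ := fun d => (Nat.gcd d 30 : ℝ) / (d:ℝ)^2 with hfd
  -- Step 1: rewrite the sum
  have hstep1 : (∑ m ∈ Finset.Icc 1 N, (sigma 1 (30*m) : ℝ)/(30*(m:ℝ)))
      = ∑ d ∈ Finset.Icc 1 M, ((N / (d / Nat.gcd d 30) : ℕ) : ℝ) * (1/(d:ℝ)) := by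
    have h1 : ∀ m ∈ Finset.Icc 1 N, (sigma 1 (30*m):ℝ)/(30*(m:ℝ))
        = ∑ d ∈ Finset.Icc 1 M, (if d ∣ 30*m then (1:ℝ)/d else 0) := by
      intro m hm
      rw [Finset.mem_Icc] at hm
      have hm0 : 0 < 30*m := by omega
      have hcast : (30:ℝ)*(m:ℝ) = ((30*m : ℕ):ℝ) := by push_cast; ring
      rw [hcast, sigma_div (30*m) hm0, ← Finset.sum_filter]
      congr 1
      ext d
      simp only [Nat.mem_divisors, Finset.mem_filter, Finset.mem_Icc]
      constructor
      · rintro ⟨hd, h0⟩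
        have hd0 : 0 < d := Nat.pos_of_dvd_of_pos hd hm0
        have hdle : d ≤ 30*m := Nat.le_of_dvd hm0 hd
        exact ⟨⟨hd0, by omega⟩, hd⟩
      · rintro ⟨_, hd⟩; exact ⟨hd, by omega⟩
    rw [Finset.sum_congr rfl h1, Finset.sum_comm]
    apply Finset.sum_congr rfl
    intro d _
    simp only [dvd_30mul d]
    rw [← Finset.sum_filter, Finset.sum_const,
      show Finset.Icc 1 N = Finset.Ioc 0 N from (by ext a; simp only [Finset.mem_Icc, Finset.mem_Ioc]; omega),
      Nat.Ioc_filter_dvd_card_eq_div]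
    simp [nsmul_eq_mul]
  -- basic per-d facts
  have hterm : ∀ d ∈ Finset.Icc 1 M,
      ((N / (d / Nat.gcd d 30) : ℕ) : ℝ) * (1/(d:ℝ)) ≤ (N:ℝ) * fd d ∧
      (N:ℝ) * fd d - 1/(d:ℝ) < ((N / (d / Nat.gcd d 30) : ℕ) : ℝ) * (1/(d:ℝ)) := by
    intro d hd
    rw [Finset.mem_Icc] at hd
    have hd0 : 0 < d := hd.1
    have hdR : (0:ℝ) < d := by exact_mod_cast hd0
    have hg : 0 < Nat.gcd d 30 := Nat.gcd_pos_of_pos_right d (by norm_num)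
    have hgR : (0:ℝ) < Nat.gcd d 30 := by exact_mod_cast hg
    have hd' : 0 < d / Nat.gcd d 30 :=
      Nat.div_pos (Nat.le_of_dvd hd0 (Nat.gcd_dvd_left d 30)) hg
    have hd'R : (0:ℝ) < ((d / Nat.gcd d 30 : ℕ):ℝ) := by exact_mod_cast hd'
    have hcast : ((d / Nat.gcd d 30 : ℕ):ℝ) = (d:ℝ)/(Nat.gcd d 30:ℝ) :=
      Nat.cast_div (Nat.gcd_dvd_left d 30) hgR.ne'
    have hfd_eq : (N:ℝ) * fd d = (N:ℝ)/((d / Nat.gcd d 30 : ℕ):ℝ) * (1/(d:ℝ)) := by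
      rw [hcast, hfd]
      field_simp
    constructor
    · have h1 : ((N / (d / Nat.gcd d 30) : ℕ) : ℝ) ≤ (N:ℝ)/((d / Nat.gcd d 30 : ℕ):ℝ) :=
        Nat.cast_div_le
      rw [hfd_eq]
      exact mul_le_mul_of_nonneg_right h1 (by positivity)
    · have e1 := Nat.div_add_mod N (d / Nat.gcd d 30)
      have e2 := Nat.mod_lt N hd'
      have e3 : N < (d / Nat.gcd d 30) * (N / (d / Nat.gcd d 30)) + (d / Nat.gcd d 30) := by omega
      have e4 : (N:ℝ) < ((d / Nat.gcd d 30 : ℕ):ℝ) * ((N / (d / Nat.gcd d 30) : ℕ):ℝ)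
          + ((d / Nat.gcd d 30 : ℕ):ℝ) := by exact_mod_cast e3
      have h2 : (N:ℝ)/((d / Nat.gcd d 30 : ℕ):ℝ) - 1 < ((N / (d / Nat.gcd d 30) : ℕ):ℝ) := by
        rw [div_sub_one hd'R.ne', div_lt_iff₀ hd'R]
        nlinarith
      rw [hfd_eq]
      have h3 : (N:ℝ)/((d / Nat.gcd d 30 : ℕ):ℝ) * (1/(d:ℝ)) - 1/(d:ℝ)
          = ((N:ℝ)/((d / Nat.gcd d 30 : ℕ):ℝ) - 1) * (1/(d:ℝ)) := by ring
      rw [h3]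
      exact mul_lt_mul_of_pos_right h2 (by positivity)
  set P : ℝ := ∑ d ∈ Finset.Icc 1 M, fd d with hP
  set H : ℝ := ∑ d ∈ Finset.Icc 1 M, 1/(d:ℝ) with hH
  have hfd_nonneg : ∀ d : ℕ, 0 ≤ fd d := fun d => by rw [hfd]; positivity
  -- upper bound on S
  have hS_ub : (∑ d ∈ Finset.Icc 1 M, ((N / (d / Nat.gcd d 30) : ℕ) : ℝ) * (1/(d:ℝ)))
      ≤ (N:ℝ) * P := by
    rw [hP, Finset.mul_sum]
    exact Finset.sum_le_sum (fun d hd => (hterm d hd).1)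
  have hS_lb : (N:ℝ) * P - H
      < ∑ d ∈ Finset.Icc 1 M, ((N / (d / Nat.gcd d 30) : ℕ) : ℝ) * (1/(d:ℝ)) := by
    rw [hP, hH, Finset.mul_sum, ← Finset.sum_sub_distrib]
    exact Finset.sum_lt_sum_of_nonempty (Finset.nonempty_Icc.2 (by omega))
      (fun d hd => (hterm d hd).2)
  -- P bounds
  have hP_ub : P ≤ 319 * π^2 / 1080 :=
    sum_le_hasSum _ (fun d _ => hfd_nonneg d) hasSum_gcd
  have hP_lb : 319 * π^2 / 1080 - 1/(N:ℝ) ≤ P := by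
    have hsm := hasSum_gcd.summable
    have htsum := Summable.sum_add_tsum_nat_add (f := fd) (M+1) hsm
    rw [hasSum_gcd.tsum_eq] at htsum
    have hrange : ∑ i ∈ Finset.range (M+1), fd i = P := by
      rw [show Finset.range (M+1) = insert 0 (Finset.Icc 1 M) from by
        ext a; simp only [Finset.mem_range, Finset.mem_insert, Finset.mem_Icc]; omega,
        Finset.sum_insert (by simp)]
      have : fd 0 = 0 := by rw [hfd]; norm_num
      rw [this, zero_add, hP]
    have htail_le : (∑' i : ℕ, fd (i + (M+1))) ≤ 1/(N:ℝ) := by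
      have hcomp : ∀ i : ℕ, fd (i + (M+1)) ≤ 30 * ((1:ℝ)/(((i:ℝ)+M)*((i:ℝ)+M+1))) := by
        intro i
        have hb1 : (0:ℝ) < (i:ℝ)+M := by positivity
        have hb2 : (0:ℝ) < (i:ℝ)+M+1 := by positivity
        have hgle : (Nat.gcd (i + (M+1)) 30 : ℝ) ≤ 30 := by
          exact_mod_cast Nat.le_of_dvd (by norm_num) (Nat.gcd_dvd_right _ 30)
        have hcast : ((i + (M+1) : ℕ):ℝ) = (i:ℝ) + M + 1 := by push_cast; ring
        have key : fd (i + (M+1)) ≤ 30 / ((i:ℝ)+M+1)^2 := by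
          simp only [hfd, hcast]
          gcongr
        have key2 : 30 / ((i:ℝ)+M+1)^2 ≤ 30 * ((1:ℝ)/(((i:ℝ)+M)*((i:ℝ)+M+1))) := by
          rw [mul_one_div, div_le_div_iff₀ (by positivity) (by positivity)]
          nlinarith
        linarith
      have hsum1 : Summable (fun i : ℕ => fd (i + (M+1))) :=
        (summable_nat_add_iff (M+1)).2 hsm
      have hsum2 := (telescope M hMpos).mul_left (30:ℝ)
      calc (∑' i : ℕ, fd (i + (M+1)))
          ≤ ∑' i : ℕ, 30 * ((1:ℝ)/(((i:ℝ)+M)*((i:ℝ)+M+1))) :=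
            Summable.tsum_le_tsum hcomp hsum1 hsum2.summable
        _ = 30 * (1/(M:ℝ)) := hsum2.tsum_eq
        _ = 1/(N:ℝ) := by
            rw [hMdef]
            push_cast
            field_simp
    linarith [htsum, hrange, htail_le]
  -- H bound
  have hH_ub : H ≤ 1 + Real.log ((M:ℕ):ℝ) := by
    have h1 : H = (harmonic M : ℝ) := by
      rw [hH, ← Finset.Ico_add_one_right_eq_Icc, Finset.sum_Ico_eq_sum_range,
        show M + 1 - 1 = M from by omega, harmonic]
      push_cast
      apply Finset.sum_congr rfl
      intro i _
      rw [one_div, add_comm]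
    rw [h1]
    exact harmonic_le_one_add_log M
  have hlogM : Real.log ((M:ℕ):ℝ) ≤ Real.log (30*x) := by
    apply Real.log_le_log (by positivity)
    rw [hMdef]; push_cast; nlinarith
  have hL : 0 < Real.log (30*x) := Real.log_pos (by nlinarith)
  -- numeric constants
  have hB_nonneg : (0:ℝ) ≤ 319 * π^2 / 1080 := by positivity
  have hB_le : 319 * π^2 / 1080 ≤ 5 := pi_sq_bound
  -- finish
  have hSx : (∑ m ∈ Finset.Icc 1 N, (sigma 1 (30*m) : ℝ)/(30*(m:ℝ)))
      = ∑ d ∈ Finset.Icc 1 M, ((N / (d / Nat.gcd d 30) : ℕ) : ℝ) * (1/(d:ℝ)) := hstep1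
  have hNP_ub : (N:ℝ) * P ≤ (319 * π^2 / 1080) * x := by
    calc (N:ℝ) * P ≤ (N:ℝ) * (319 * π^2 / 1080) :=
          mul_le_mul_of_nonneg_left hP_ub hNR.le
      _ ≤ x * (319 * π^2 / 1080) := mul_le_mul_of_nonneg_right hNle hB_nonneg
      _ = (319 * π^2 / 1080) * x := by ring
  have hNP_lb : (319 * π^2 / 1080) * x - 6 ≤ (N:ℝ) * P := by
    have h1 : (N:ℝ) * (319 * π^2 / 1080 - 1/(N:ℝ)) ≤ (N:ℝ) * P :=
      mul_le_mul_of_nonneg_left hP_lb hNR.le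
    have h2 : (N:ℝ) * (319 * π^2 / 1080 - 1/(N:ℝ)) = (N:ℝ) * (319 * π^2 / 1080) - 1 := by
      field_simp
    have h3 : (319 * π^2 / 1080) * x - (N:ℝ) * (319 * π^2 / 1080) ≤ 5 := by
      have : (319 * π^2 / 1080) * (x - N) ≤ 5 * 1 := by
        apply mul_le_mul hB_le (by linarith) (by linarith) (by norm_num)
      nlinarith
    linarith
  constructor
  · rw [hSx]
    have : (N:ℝ) * P - H < ∑ d ∈ Finset.Icc 1 M, ((N / (d / Nat.gcd d 30) : ℕ) : ℝ) * (1/(d:ℝ)) := hS_lb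
    have hH2 : H ≤ 1 + Real.log (30*x) := le_trans hH_ub (by linarith)
    linarith
  · rw [hSx]
    linarith
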